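/- Let (X,d) be an arbitrary metric space and let p ∈ X. Then the distance function τ_p is a metric on X∖{p}; in particular, for all x, y, z ∈ X∖{p} it satisfies the triangle inequality τ_p(x,y) ≤ τ_p(x,z) + τ_p(z,y). -/
import Mathlib


noncomputable def tauOne {X : Type*} [MetricSpace X] (p x y : X) : ℝ :=
  Real.log (1 + 2 * dist x y / Real.sqrt (dist x p * dist y p))

private lemma key_aux (sb sc v : ℝ) (hsb : 0 ≤ sb) (hsc : 0 ≤ sc) (hv : 0 ≤ v)
    (h : sc ^ 2 ≤ sb ^ 2 + v) : sc ^ 2 ≤ sb * sc + v := by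
  rcases le_total sc sb with h' | h'
  · nlinarith [mul_le_mul_of_nonneg_right h' hsc]
  · nlinarith [mul_nonneg hsb (sub_nonneg.2 h')]

theorem stmt0 {X : Type*} [MetricSpace X] (p : X) :
    (∀ x y : X, x ≠ p → y ≠ p → 0 ≤ tauOne p x y) ∧
    (∀ x y : X, x ≠ p → y ≠ p → tauOne p x y = tauOne p y x) ∧
    (∀ x y : X, x ≠ p → y ≠ p → (tauOne p x y = 0 ↔ x = y)) ∧
    (∀ x y z : X, x ≠ p → y ≠ p → z ≠ p →
      tauOne p x y ≤ tauOne p x z + tauOne p z y) := by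
  have harg : ∀ x y : X, (1:ℝ) ≤ 1 + 2 * dist x y / Real.sqrt (dist x p * dist y p) := by
    intro x y
    have : 0 ≤ 2 * dist x y / Real.sqrt (dist x p * dist y p) := by positivity
    linarith
  refine ⟨fun x y hx hy => Real.log_nonneg (harg x y), fun x y hx hy => by
      unfold tauOne; rw [dist_comm x y, mul_comm (dist x p)], ?_, ?_⟩
  · intro x y hx hy
    unfold tauOne
    constructor
    · intro h
      have h1 := harg x y
      have h2 : (1:ℝ) + 2 * dist x y / Real.sqrt (dist x p * dist y p) = 1 := by
        rcases Real.log_eq_zero.mp h with h' | h' | h' <;> linarith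
      have hs : 0 < Real.sqrt (dist x p * dist y p) := by
        apply Real.sqrt_pos.mpr
        have hxp : 0 < dist x p := dist_pos.mpr hx
        have hyp : 0 < dist y p := dist_pos.mpr hy
        positivity
      have h3 : 2 * dist x y / Real.sqrt (dist x p * dist y p) = 0 := by linarith
      rcases div_eq_zero_iff.mp h3 with h4 | h4
      · exact dist_eq_zero.mp (by linarith)
      · exact absurd h4 hs.ne'
    · intro h; subst h; simp
  · intro x y z hx hy hz
    have ha : 0 < dist x p := dist_pos.mpr hx
    have hb : 0 < dist y p := dist_pos.mpr hy
    have hc : 0 < dist z p := dist_pos.mpr hz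
    set sa := Real.sqrt (dist x p) with hsa
    set sb := Real.sqrt (dist y p) with hsb
    set sc := Real.sqrt (dist z p) with hsc
    have hsa0 : 0 < sa := Real.sqrt_pos.mpr ha
    have hsb0 : 0 < sb := Real.sqrt_pos.mpr hb
    have hsc0 : 0 < sc := Real.sqrt_pos.mpr hc
    have hsa2 : sa ^ 2 = dist x p := Real.sq_sqrt ha.le
    have hsb2 : sb ^ 2 = dist y p := Real.sq_sqrt hb.le
    have hsc2 : sc ^ 2 = dist z p := Real.sq_sqrt hc.le
    have hmulab : Real.sqrt (dist x p * dist y p) = sa * sb := by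
      rw [Real.sqrt_mul ha.le]
    have hmulac : Real.sqrt (dist x p * dist z p) = sa * sc := by
      rw [Real.sqrt_mul ha.le]
    have hmulcb : Real.sqrt (dist z p * dist y p) = sc * sb := by
      rw [Real.sqrt_mul hc.le]
    set u := dist x z with hu
    set v := dist z y with hv
    set w := dist x y with hw
    have hu0 : 0 ≤ u := dist_nonneg
    have hv0 : 0 ≤ v := dist_nonneg
    have hw0 : 0 ≤ w := dist_nonneg
    have htri : w ≤ u + v := dist_triangle x z y
    -- key inequalities
    have k1 : sc ^ 2 ≤ sb * sc + v := by
      apply key_aux _ _ _ hsb0.le hsc0.le hv0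
      rw [hsb2, hsc2]
      have := dist_triangle z y p
      linarith
    have k2 : sc ^ 2 ≤ sa * sc + u := by
      apply key_aux _ _ _ hsa0.le hsc0.le hu0
      rw [hsa2, hsc2]
      have := dist_triangle z x p
      rw [dist_comm z x] at this
      linarith
    unfold tauOne
    rw [hmulab, hmulac, hmulcb, ← hu, ← hv, ← hw]
    rw [← Real.log_mul (by positivity) (by positivity)]
    apply Real.log_le_log (by positivity)
    have lhs_eq : 1 + 2 * w / (sa * sb) = (sa * sb + 2 * w) / (sa * sb) := by
      field_simp
    rw [lhs_eq]
    have expand : (1 + 2 * u / (sa * sc)) * (1 + 2 * v / (sc * sb))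
        = (sa * sc * (sc * sb) + 2 * u * (sc * sb) + 2 * v * (sa * sc) + 4 * u * v)
          / (sa * sc * (sc * sb)) := by
      field_simp
      ring
    rw [expand]
    rw [div_le_div_iff₀ (by positivity) (by positivity)]
    have h1 : 2 * w * sc ^ 2 ≤ 2 * u * (sb * sc) + 2 * v * (sa * sc) + 4 * (u * v) := by
      nlinarith [mul_le_mul_of_nonneg_left k1 hu0, mul_le_mul_of_nonneg_left k2 hv0,
        mul_le_mul_of_nonneg_right htri (sq_nonneg sc)]
    nlinarith [mul_le_mul_of_nonneg_right h1 (mul_pos hsa0 hsb0).le, sq_nonneg sc,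
      mul_pos hsa0 hsb0, mul_pos hsc0 hsc0]
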